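/- The LP relaxation distance vanishes if and only if the sets of trajectories are equal: d̄_p^{(c,γ)}(X,Y) = 0 iff X = Y (as finite sets of trajectories over time steps 1..T). -/

import Mathlib

open Finset

/-- A trajectory in ℝ^N. -/
structure Traj (N : ℕ) where
  ω : ℕ
  ν : ℕ
  x : Fin ν → (Fin N → ℝ)

/-- The (possibly empty) state of the trajectory at time `k`. -/
def tau {N : ℕ} (X : Traj N) (k : ℕ) : Option (Fin N → ℝ) :=
  if h : X.ω ≤ k ∧ k < X.ω + X.ν then some (X.x ⟨k - X.ω, by omega⟩) else none

/-- Base metric of Definition 1 on at-most-one-element subsets of ℝ^N. -/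
noncomputable def dOpt {N : ℕ} (db : (Fin N → ℝ) → (Fin N → ℝ) → ℝ) (c p : ℝ) :
    Option (Fin N → ℝ) → Option (Fin N → ℝ) → ℝ
  | some x, some y => min c (db x y)
  | none, none => 0
  | _, _ => c / (2 : ℝ) ^ (1 / p)

/-- The state of the `i`-th trajectory at time `k`, where the extra index
`n_X + 1` stands for "unassigned" and yields the empty set. -/
def tauE {N n : ℕ} (X : Fin n → Traj N) (i : Fin (n + 1)) (k : ℕ) :
    Option (Fin N → ℝ) :=
  if h : (i : ℕ) < n then tau (X ⟨i, h⟩) k else none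

/-- The relaxed assignment polytope `W̄_{X,Y}` (Eqs. (18)-(21), (23)). -/
def memWbar {m n : ℕ} (W : Matrix (Fin (m + 1)) (Fin (n + 1)) ℝ) : Prop :=
  (∀ i j, 0 ≤ W i j) ∧
  (∀ j : Fin n, ∑ i, W i j.castSucc = 1) ∧
  (∀ i : Fin m, ∑ j, W i.castSucc j = 1) ∧
  W (Fin.last m) (Fin.last n) = 0

/-- The binary assignment set `W_{X,Y}` (Eqs. (18)-(21)). -/
def memWbin {m n : ℕ} (W : Matrix (Fin (m + 1)) (Fin (n + 1)) ℝ) : Prop :=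
  memWbar W ∧ ∀ i j, W i j = 0 ∨ W i j = 1

/-- The cost functional of Lemma 1 / Definition 6: localization cost plus
switching cost of a sequence of (possibly soft) assignment matrices. -/
noncomputable def lpCost {N nX nY : ℕ} (db : (Fin N → ℝ) → (Fin N → ℝ) → ℝ)
    (c γ p : ℝ) (T : ℕ) (X : Fin nX → Traj N) (Y : Fin nY → Traj N)
    (W : ℕ → Matrix (Fin (nX + 1)) (Fin (nY + 1)) ℝ) : ℝ :=
  (∑ k ∈ Finset.range T, ∑ i, ∑ j,
      (dOpt db c p (tauE X i k) (tauE Y j k)) ^ p * W k i j) +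
  γ ^ p / 2 * ∑ k ∈ Finset.range (T - 1), ∑ i : Fin nX, ∑ j : Fin nY,
      |W k i.castSucc j.castSucc - W (k + 1) i.castSucc j.castSucc|

/-- The multi-dimensional assignment distance in its binary LP form (Eq. (16)). -/
noncomputable def mdDistBin {N nX nY : ℕ} (db : (Fin N → ℝ) → (Fin N → ℝ) → ℝ)
    (c γ p : ℝ) (T : ℕ) (X : Fin nX → Traj N) (Y : Fin nY → Traj N) : ℝ :=
  sInf { v | ∃ W : ℕ → Matrix (Fin (nX + 1)) (Fin (nY + 1)) ℝ,
    (∀ k < T, memWbin (W k)) ∧ v = (lpCost db c γ p T X Y W) ^ (1 / p) }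

/-- The LP relaxation distance (Definition 6, Eq. (22)). -/
noncomputable def lpDist {N nX nY : ℕ} (db : (Fin N → ℝ) → (Fin N → ℝ) → ℝ)
    (c γ p : ℝ) (T : ℕ) (X : Fin nX → Traj N) (Y : Fin nY → Traj N) : ℝ :=
  sInf { v | ∃ W : ℕ → Matrix (Fin (nX + 1)) (Fin (nY + 1)) ℝ,
    (∀ k < T, memWbar (W k)) ∧ v = (lpCost db c γ p T X Y W) ^ (1 / p) }



section AuxLemmas

variable {N : ℕ}

lemma tau_apply {X : Traj N} {k : ℕ} (h1 : X.ω ≤ k) (h2 : k < X.ω + X.ν) :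
    tau X k = some (X.x ⟨k - X.ω, by omega⟩) := dif_pos ⟨h1, h2⟩

lemma tau_none_of_window_le {X : Traj N} {k : ℕ} (h : X.ω + X.ν ≤ k) : tau X k = none :=
  dif_neg (by omega)

lemma tau_ne_none {X : Traj N} {k : ℕ} (h1 : X.ω ≤ k) (h2 : k < X.ω + X.ν) :
    tau X k ≠ none := by
  rw [tau_apply h1 h2]; simp

lemma traj_ext {X Y : Traj N} (hX : 1 ≤ X.ν) (hY : 1 ≤ Y.ν)
    (h : ∀ k, tau X k = tau Y k) : X = Y := by
  have hmem : ∀ k, (X.ω ≤ k ∧ k < X.ω + X.ν) ↔ (Y.ω ≤ k ∧ k < Y.ω + Y.ν) := by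
    intro k
    constructor
    · intro hk
      by_contra hk'
      have h1 := tau_ne_none hk.1 hk.2
      rw [h k] at h1
      exact h1 (dif_neg hk')
    · intro hk
      by_contra hk'
      have h1 := tau_ne_none hk.1 hk.2
      rw [← h k] at h1
      exact h1 (dif_neg hk')
  have hω : X.ω = Y.ω := by
    have h1 := (hmem X.ω).mp ⟨le_refl _, by omega⟩
    have h2 := (hmem Y.ω).mpr ⟨le_refl _, by omega⟩
    omega
  have hν : X.ν = Y.ν := by
    have h1 := (hmem (X.ω + X.ν - 1)).mp ⟨by omega, by omega⟩
    have h2 := (hmem (Y.ω + Y.ν - 1)).mpr ⟨by omega, by omega⟩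
    omega
  obtain ⟨ω, ν, x⟩ := X
  obtain ⟨ω', ν', x'⟩ := Y
  simp only at hω hν
  subst hω; subst hν
  simp only [Traj.mk.injEq, heq_eq_eq, true_and]
  funext t
  have ht := h (ω + (t : ℕ))
  rw [tau_apply (X := ⟨ω, ν, x⟩) (Nat.le_add_right ω t) (Nat.add_lt_add_left t.isLt ω),
      tau_apply (X := ⟨ω, ν, x'⟩) (Nat.le_add_right ω t) (Nat.add_lt_add_left t.isLt ω)] at ht
  have ht' := Option.some.inj ht
  convert ht' using 2 <;> exact Fin.ext (by simp)

lemma tauE_castSucc {n : ℕ} (A : Fin n → Traj N) (i : Fin n) (k : ℕ) :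
    tauE A i.castSucc k = tau (A i) k := by
  have h : ((i.castSucc : Fin (n+1)) : ℕ) < n := by simpa using i.isLt
  have h2 : (⟨((i.castSucc : Fin (n+1)) : ℕ), h⟩ : Fin n) = i := Fin.ext (by simp)
  rw [tauE, dif_pos h, h2]

lemma tauE_last {n : ℕ} (A : Fin n → Traj N) (k : ℕ) :
    tauE A (Fin.last n) k = none := by
  rw [tauE, dif_neg]; simp

variable {db : (Fin N → ℝ) → (Fin N → ℝ) → ℝ} {c p : ℝ}

lemma dOpt_nonneg (hc : 0 ≤ c) (hdb : ∀ x y, 0 ≤ db x y) (a b : Option (Fin N → ℝ)) :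
    0 ≤ dOpt db c p a b := by
  cases a <;> cases b
  · exact le_refl _
  · exact div_nonneg hc (Real.rpow_pos_of_pos two_pos _).le
  · exact div_nonneg hc (Real.rpow_pos_of_pos two_pos _).le
  · exact le_min hc (hdb _ _)

lemma dOpt_self (hc : 0 ≤ c) (hdb_eq : ∀ x y, db x y = 0 ↔ x = y)
    (a : Option (Fin N → ℝ)) : dOpt db c p a a = 0 := by
  cases a with
  | none => rfl
  | some x =>
    show min c (db x x) = 0
    rw [(hdb_eq x x).mpr rfl]
    exact min_eq_right hc

lemma eq_of_dOpt_eq_zero (hc : 0 < c) (hdb_nonneg : ∀ x y, 0 ≤ db x y)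
    (hdb_eq : ∀ x y, db x y = 0 ↔ x = y) {a b : Option (Fin N → ℝ)}
    (h : dOpt db c p a b = 0) : a = b := by
  cases a <;> cases b
  · rfl
  · exact absurd h (div_pos hc (Real.rpow_pos_of_pos two_pos _)).ne'
  · exact absurd h (div_pos hc (Real.rpow_pos_of_pos two_pos _)).ne'
  · rename_i x y
    have h' : min c (db x y) = 0 := h
    have : db x y = 0 := by
      rcases le_total c (db x y) with hle | hle
      · rw [min_eq_left hle] at h'; exact absurd h' hc.ne'
      · rw [min_eq_right hle] at h'; exact h'
    rw [(hdb_eq x y).mp this]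

lemma lpCost_nonneg {nX nY : ℕ} {γ : ℝ} (hc : 0 ≤ c) (hγ : 0 ≤ γ)
    (hdb : ∀ x y, 0 ≤ db x y) (T : ℕ) (X : Fin nX → Traj N) (Y : Fin nY → Traj N)
    (W : ℕ → Matrix (Fin (nX + 1)) (Fin (nY + 1)) ℝ)
    (hW : ∀ k < T, ∀ i j, 0 ≤ W k i j) : 0 ≤ lpCost db c γ p T X Y W := by
  unfold lpCost
  apply add_nonneg
  · refine Finset.sum_nonneg fun k hk => Finset.sum_nonneg fun i _ => Finset.sum_nonneg fun j _ => ?_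
    exact mul_nonneg (Real.rpow_nonneg (dOpt_nonneg hc hdb _ _) p)
      (hW k (Finset.mem_range.mp hk) i j)
  · exact mul_nonneg (div_nonneg (Real.rpow_nonneg hγ p) (by norm_num))
      (Finset.sum_nonneg fun _ _ => Finset.sum_nonneg fun _ _ =>
        Finset.sum_nonneg fun _ _ => abs_nonneg _)

end AuxLemmas


lemma range_subset_aux {N m n T : ℕ} {A : Fin m → Traj N} {B : Fin n → Traj N}
    (hAwin : ∀ i, 1 ≤ (A i).ν ∧ (A i).ω + (A i).ν ≤ T)
    (hBwin : ∀ j, 1 ≤ (B j).ν ∧ (B j).ω + (B j).ν ≤ T)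
    (W : ℕ → Matrix (Fin (m + 1)) (Fin (n + 1)) ℝ)
    (hrow : ∀ k < T, ∀ i : Fin m, ∑ j, W k i.castSucc j = 1)
    (hmatch : ∀ k < T, ∀ i j, W k i j ≠ 0 → tauE A i k = tauE B j k)
    (hconst : ∀ k < T, ∀ k' < T, ∀ (i : Fin m) (j : Fin n),
      W k i.castSucc j.castSucc = W k' i.castSucc j.castSucc)
    (i : Fin m) : A i ∈ Set.range B := by
  have hk0T : (A i).ω < T := by have := hAwin i; omega
  have hex : ∃ j : Fin (n + 1), W (A i).ω i.castSucc j ≠ 0 := by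
    by_contra hno
    push_neg at hno
    have h1 := hrow (A i).ω hk0T i
    rw [Finset.sum_eq_zero (fun j _ => hno j)] at h1
    norm_num at h1
  obtain ⟨j, hj⟩ := hex
  have hmat := hmatch (A i).ω hk0T i.castSucc j hj
  rw [tauE_castSucc] at hmat
  have hAω : tau (A i) (A i).ω = some ((A i).x ⟨(A i).ω - (A i).ω, by have := hAwin i; omega⟩) :=
    tau_apply (le_refl _) (by have := hAwin i; omega)
  have hjn : (j : ℕ) < n := by
    by_contra hjn
    have hjl : j = Fin.last n := Fin.ext (by have := j.isLt; simp; omega)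
    rw [hjl, tauE_last, hAω] at hmat
    exact Option.some_ne_none _ hmat
  set j' : Fin n := ⟨j, hjn⟩ with hj'def
  have hjcs : j'.castSucc = j := Fin.ext rfl
  refine ⟨j', traj_ext (hBwin j').1 (hAwin i).1 ?_⟩
  intro k
  by_cases hk : k < T
  · have hW : W k i.castSucc j'.castSucc ≠ 0 := by
      rw [hconst k hk (A i).ω hk0T i j', hjcs]; exact hj
    have h2 := hmatch k hk i.castSucc j'.castSucc hW
    rw [tauE_castSucc, tauE_castSucc] at h2
    exact h2.symm
  · rw [tau_none_of_window_le (by have := hBwin j'; omega),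
        tau_none_of_window_le (by have := hAwin i; omega)]

/-- The LP relaxation distance vanishes if and only if the two sets of
trajectories (over time steps `0, ..., T-1`) are equal. The families `X` and
`Y` enumerate the sets without repetition, and every trajectory is nonempty
and lives inside the time window. -/
theorem lpDist_eq_zero_iff {N nX nY : ℕ} (db : (Fin N → ℝ) → (Fin N → ℝ) → ℝ)
    (c γ p : ℝ) (hc : 0 < c) (hγ : 0 < γ) (hp : 1 ≤ p)
    (hdb_nonneg : ∀ x y, 0 ≤ db x y)
    (hdb_eq : ∀ x y, db x y = 0 ↔ x = y)
    (hdb_symm : ∀ x y, db x y = db y x)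
    (hdb_tri : ∀ x y z, db x z ≤ db x y + db y z)
    (T : ℕ) (X : Fin nX → Traj N) (Y : Fin nY → Traj N)
    (hXinj : Function.Injective X) (hYinj : Function.Injective Y)
    (hXwin : ∀ i, 1 ≤ (X i).ν ∧ (X i).ω + (X i).ν ≤ T)
    (hYwin : ∀ j, 1 ≤ (Y j).ν ∧ (Y j).ω + (Y j).ν ≤ T) :
    lpDist db c γ p T X Y = 0 ↔ Set.range X = Set.range Y := by
  have hp0 : (0:ℝ) < p := lt_of_lt_of_le one_pos hp
  have hpne : p ≠ 0 := hp0.ne'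
  have hpinv : (1:ℝ) / p ≠ 0 := by positivity
  constructor
  · intro h0
    rcases Nat.eq_zero_or_pos T with hT | hT
    · have hX0 : Set.range X = ∅ := by
        rw [Set.range_eq_empty_iff]
        constructor; intro i; have := hXwin i; omega
      have hY0 : Set.range Y = ∅ := by
        rw [Set.range_eq_empty_iff]
        constructor; intro j; have := hYwin j; omega
      rw [hX0, hY0]
    · classical
      set extW : (Fin T → Fin (nX + 1) → Fin (nY + 1) → ℝ) → ℕ → Matrix (Fin (nX + 1)) (Fin (nY + 1)) ℝ :=
        fun φ k => if h : k < T then φ ⟨k, h⟩ else 0 with hextdef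
      set S : Set (Fin T → Fin (nX + 1) → Fin (nY + 1) → ℝ) := {φ | ∀ k, memWbar (φ k)} with hSdef
      set g : (Fin T → Fin (nX + 1) → Fin (nY + 1) → ℝ) → ℝ :=
        fun φ => (lpCost db c γ p T X Y (extW φ)) ^ ((1:ℝ) / p) with hgdef
      have hext_lt : ∀ (φ : Fin T → Fin (nX + 1) → Fin (nY + 1) → ℝ) (k : ℕ) (h : k < T), extW φ k = φ ⟨k, h⟩ :=
        fun φ k h => dif_pos h
      have hcongr : ∀ (W W' : ℕ → Matrix (Fin (nX + 1)) (Fin (nY + 1)) ℝ),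
          (∀ k < T, W k = W' k) →
          lpCost db c γ p T X Y W = lpCost db c γ p T X Y W' := by
        intro W W' h
        unfold lpCost
        congr 1
        · refine Finset.sum_congr rfl fun k hk => ?_
          rw [h k (Finset.mem_range.mp hk)]
        · congr 1
          refine Finset.sum_congr rfl fun k hk => ?_
          have hk' := Finset.mem_range.mp hk
          rw [h k (by omega), h (k + 1) (by omega)]
      have hVeq : {v | ∃ W : ℕ → Matrix (Fin (nX + 1)) (Fin (nY + 1)) ℝ,
          (∀ k < T, memWbar (W k)) ∧ v = (lpCost db c γ p T X Y W) ^ (1 / p)} = g '' S := by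
        ext v
        constructor
        · rintro ⟨W, hW, rfl⟩
          refine ⟨fun k => W (k : ℕ), fun k => hW k k.isLt, ?_⟩
          have hEq : lpCost db c γ p T X Y (extW fun k : Fin T => W (k : ℕ)) =
              lpCost db c γ p T X Y W :=
            hcongr _ W (fun k hk => (hext_lt (fun k : Fin T => W (k : ℕ)) k hk).trans rfl)
          rw [hgdef]
          dsimp only
          rw [hEq]
        · rintro ⟨φ, hφ, rfl⟩
          exact ⟨extW φ, fun k hk => by rw [hext_lt φ k hk]; exact hφ _, rfl⟩
      have hSne : S.Nonempty := by
        refine ⟨fun _ => fun i j =>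
          if ((i : ℕ) = nX ∧ (j : ℕ) < nY) ∨ ((i : ℕ) < nX ∧ (j : ℕ) = nY) then 1 else 0,
          fun k => ⟨?_, ?_, ?_, ?_⟩⟩
        · intro i j; dsimp only; split <;> norm_num
        · intro j
          have hj := j.isLt
          simp only [Fin.sum_univ_castSucc, Fin.coe_castSucc, Fin.val_last]
          rw [Finset.sum_eq_zero (fun i (_ : i ∈ Finset.univ) =>
            if_neg (by have := i.isLt; omega)), zero_add, if_pos (Or.inl ⟨trivial, hj⟩)]
        · intro i
          have hi := i.isLt
          simp only [Fin.sum_univ_castSucc, Fin.coe_castSucc, Fin.val_last]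
          rw [Finset.sum_eq_zero (fun j (_ : j ∈ Finset.univ) =>
            if_neg (by have := j.isLt; omega)), zero_add, if_pos (Or.inr ⟨hi, trivial⟩)]
        · exact if_neg (by simp only [Fin.val_last]; omega)
      have hev2 : ∀ (k : Fin T) (i : Fin (nX + 1)) (j : Fin (nY + 1)),
          Continuous fun φ : Fin T → Fin (nX + 1) → Fin (nY + 1) → ℝ => φ k i j := fun k i j =>
        (continuous_apply j).comp ((continuous_apply i).comp (continuous_apply k))
      have hScl : IsClosed S := by
        have hSrw : S = (⋂ (k : Fin T), ⋂ i, ⋂ j, {φ : Fin T → Fin (nX + 1) → Fin (nY + 1) → ℝ | 0 ≤ φ k i j}) ∩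
            ((⋂ (k : Fin T), ⋂ (j : Fin nY), {φ : Fin T → Fin (nX + 1) → Fin (nY + 1) → ℝ | ∑ i, φ k i j.castSucc = 1}) ∩
            ((⋂ (k : Fin T), ⋂ (i : Fin nX), {φ : Fin T → Fin (nX + 1) → Fin (nY + 1) → ℝ | ∑ j, φ k i.castSucc j = 1}) ∩
            (⋂ (k : Fin T), {φ : Fin T → Fin (nX + 1) → Fin (nY + 1) → ℝ | φ k (Fin.last nX) (Fin.last nY) = 0}))) := by
          ext φ
          simp only [hSdef, Set.mem_setOf_eq, Set.mem_inter_iff, Set.mem_iInter, memWbar]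
          constructor
          · intro h
            exact ⟨fun k i j => (h k).1 i j, fun k j => (h k).2.1 j,
              fun k i => (h k).2.2.1 i, fun k => (h k).2.2.2⟩
          · rintro ⟨h1, h2, h3, h4⟩ k
            exact ⟨h1 k, h2 k, h3 k, h4 k⟩
        rw [hSrw]
        refine IsClosed.inter ?_ (IsClosed.inter ?_ (IsClosed.inter ?_ ?_))
        · exact isClosed_iInter fun k => isClosed_iInter fun i => isClosed_iInter fun j =>
            isClosed_le continuous_const (hev2 k i j)
        · exact isClosed_iInter fun k => isClosed_iInter fun j =>
            isClosed_eq (continuous_finset_sum _ fun i _ => hev2 k i j.castSucc) continuous_const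
        · exact isClosed_iInter fun k => isClosed_iInter fun i =>
            isClosed_eq (continuous_finset_sum _ fun j _ => hev2 k i.castSucc j) continuous_const
        · exact isClosed_iInter fun k =>
            isClosed_eq (hev2 k (Fin.last nX) (Fin.last nY)) continuous_const
      have hSbd : S ⊆ Metric.closedBall (0 : Fin T → Fin (nX + 1) → Fin (nY + 1) → ℝ) 1 := by
        intro φ hφ
        have hentry : ∀ (k : Fin T) i j, φ k i j ∈ Set.Icc (0:ℝ) 1 := by
          intro k i j
          obtain ⟨hnn, hcol, hrw, hll⟩ := hφ k
          refine ⟨hnn i j, ?_⟩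
          rcases eq_or_ne j (Fin.last nY) with rfl | hj
          · rcases eq_or_ne i (Fin.last nX) with rfl | hi
            · rw [hll]; norm_num
            · obtain ⟨i', rfl⟩ := Fin.exists_castSucc_eq.mpr hi
              calc φ k i'.castSucc (Fin.last nY)
                  ≤ ∑ j, φ k i'.castSucc j :=
                    Finset.single_le_sum (fun j _ => hnn _ j) (Finset.mem_univ _)
                _ = 1 := hrw i'
          · obtain ⟨j', rfl⟩ := Fin.exists_castSucc_eq.mpr hj
            calc φ k i j'.castSucc
                ≤ ∑ i, φ k i j'.castSucc :=
                  Finset.single_le_sum (fun i _ => hnn i _) (Finset.mem_univ _)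
              _ = 1 := hcol j'
        rw [Metric.mem_closedBall, dist_pi_le_iff zero_le_one]
        intro k
        rw [dist_pi_le_iff zero_le_one]
        intro i
        rw [dist_pi_le_iff zero_le_one]
        intro j
        have hij := hentry k i j
        simp only [Pi.zero_apply, Real.dist_eq, sub_zero]
        rw [abs_le]
        exact ⟨by linarith [hij.1], hij.2⟩
      have hScomp : IsCompact S :=
        Metric.isCompact_of_isClosed_isBounded hScl (Metric.isBounded_closedBall.subset hSbd)
      have hgcont : Continuous g := by
        rw [hgdef]
        have hev : ∀ (k : ℕ), k < T → ∀ (i : Fin (nX + 1)) (j : Fin (nY + 1)),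
            Continuous fun φ : Fin T → Fin (nX + 1) → Fin (nY + 1) → ℝ => extW φ k i j := by
          intro k hk i j
          have he : (fun φ : Fin T → Fin (nX + 1) → Fin (nY + 1) → ℝ => extW φ k i j) = fun φ => φ ⟨k, hk⟩ i j := by
            funext φ; rw [hext_lt φ k hk]
          rw [he]
          exact hev2 ⟨k, hk⟩ i j
        have hF : Continuous fun φ : Fin T → Fin (nX + 1) → Fin (nY + 1) → ℝ => lpCost db c γ p T X Y (extW φ) := by
          unfold lpCost
          apply Continuous.add
          · apply continuous_finset_sum
            intro k hk
            apply continuous_finset_sum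
            intro i _
            apply continuous_finset_sum
            intro j _
            exact continuous_const.mul (hev k (Finset.mem_range.mp hk) i j)
          · apply Continuous.mul continuous_const
            apply continuous_finset_sum
            intro k hk
            have hk' := Finset.mem_range.mp hk
            apply continuous_finset_sum
            intro i _
            apply continuous_finset_sum
            intro j _
            exact ((hev k (by omega) _ _).sub (hev (k + 1) (by omega) _ _)).abs
        exact (Real.continuous_rpow_const (by positivity)).comp hF
      obtain ⟨φ₀, hφ₀S, hmin⟩ := hScomp.exists_isMinOn hSne hgcont.continuousOn
      have hlb : ∀ v ∈ g '' S, g φ₀ ≤ v := by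
        rintro v ⟨φ, hφ, rfl⟩
        exact isMinOn_iff.mp hmin φ hφ
      have hginf : sInf (g '' S) = g φ₀ :=
        le_antisymm (csInf_le ⟨g φ₀, fun v hv => hlb v hv⟩ ⟨φ₀, hφ₀S, rfl⟩)
          (le_csInf ⟨g φ₀, φ₀, hφ₀S, rfl⟩ hlb)
      unfold lpDist at h0
      rw [hVeq, hginf] at h0
      rw [hgdef] at h0
      dsimp only at h0
      obtain ⟨Wst, hWstdef⟩ : ∃ w : ℕ → Matrix (Fin (nX + 1)) (Fin (nY + 1)) ℝ, w = extW φ₀ :=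
        ⟨_, rfl⟩
      rw [← hWstdef] at h0
      have hfeas : ∀ k < T, memWbar (Wst k) := by
        intro k hk
        rw [hWstdef, hext_lt φ₀ k hk]
        exact hφ₀S _
      have hcost0 : lpCost db c γ p T X Y Wst = 0 := by
        have hnn := lpCost_nonneg (p := p) hc.le hγ.le hdb_nonneg T X Y Wst
          (fun k hk i j => (hfeas k hk).1 i j)
        exact (Real.rpow_eq_zero hnn hpinv).mp h0
      unfold lpCost at hcost0
      have hnn1 : ∀ k, k < T → ∀ i j,
          0 ≤ (dOpt db c p (tauE X i k) (tauE Y j k)) ^ p * Wst k i j := fun k hk i j =>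
        mul_nonneg (Real.rpow_nonneg (dOpt_nonneg hc.le hdb_nonneg _ _) p)
          ((hfeas k hk).1 i j)
      set s1 := ∑ k ∈ Finset.range T, ∑ i, ∑ j,
          (dOpt db c p (tauE X i k) (tauE Y j k)) ^ p * Wst k i j with hs1def
      set s2 := ∑ k ∈ Finset.range (T - 1), ∑ i : Fin nX, ∑ j : Fin nY,
          |Wst k i.castSucc j.castSucc - Wst (k + 1) i.castSucc j.castSucc| with hs2def
      have hs1nn : 0 ≤ s1 := Finset.sum_nonneg fun k hk => Finset.sum_nonneg fun i _ =>
        Finset.sum_nonneg fun j _ => hnn1 k (Finset.mem_range.mp hk) i j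
      have hs2nn : 0 ≤ s2 := Finset.sum_nonneg fun _ _ => Finset.sum_nonneg fun _ _ =>
        Finset.sum_nonneg fun _ _ => abs_nonneg _
      have hγp : 0 < γ ^ p / 2 := div_pos (Real.rpow_pos_of_pos hγ p) two_pos
      have hs1z : s1 = 0 := by nlinarith [mul_nonneg hγp.le hs2nn]
      have hs2z : s2 = 0 := by
        have h2 : γ ^ p / 2 * s2 = 0 := by linarith
        rcases mul_eq_zero.mp h2 with h | h
        · exact absurd h hγp.ne'
        · exact h
      have hterm : ∀ k, k < T → ∀ i j,
          (dOpt db c p (tauE X i k) (tauE Y j k)) ^ p * Wst k i j = 0 := by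
        intro k hk i j
        refine le_antisymm ?_ (hnn1 k hk i j)
        calc (dOpt db c p (tauE X i k) (tauE Y j k)) ^ p * Wst k i j
            ≤ ∑ j, (dOpt db c p (tauE X i k) (tauE Y j k)) ^ p * Wst k i j :=
              Finset.single_le_sum (fun j _ => hnn1 k hk i j) (Finset.mem_univ j)
          _ ≤ ∑ i, ∑ j, (dOpt db c p (tauE X i k) (tauE Y j k)) ^ p * Wst k i j :=
              Finset.single_le_sum
                (fun i _ => Finset.sum_nonneg fun j _ => hnn1 k hk i j) (Finset.mem_univ i)
          _ ≤ s1 := by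
              rw [hs1def]
              exact Finset.single_le_sum
                (fun k' hk' => Finset.sum_nonneg fun i _ => Finset.sum_nonneg fun j _ =>
                  hnn1 k' (Finset.mem_range.mp hk') i j) (Finset.mem_range.mpr hk)
          _ = 0 := hs1z
      have hmatch : ∀ k < T, ∀ i j, Wst k i j ≠ 0 → tauE X i k = tauE Y j k := by
        intro k hk i j hW
        rcases mul_eq_zero.mp (hterm k hk i j) with h | h
        · exact eq_of_dOpt_eq_zero hc hdb_nonneg hdb_eq
            ((Real.rpow_eq_zero (dOpt_nonneg hc.le hdb_nonneg _ _) hpne).mp h)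
        · exact absurd h hW
      have habs : ∀ k, k < T - 1 → ∀ (i : Fin nX) (j : Fin nY),
          Wst k i.castSucc j.castSucc = Wst (k + 1) i.castSucc j.castSucc := by
        intro k hk i j
        have habs0 : |Wst k i.castSucc j.castSucc - Wst (k + 1) i.castSucc j.castSucc| = 0 := by
          refine le_antisymm ?_ (abs_nonneg _)
          calc |Wst k i.castSucc j.castSucc - Wst (k + 1) i.castSucc j.castSucc|
              ≤ ∑ j : Fin nY, |Wst k i.castSucc j.castSucc - Wst (k + 1) i.castSucc j.castSucc| :=
                Finset.single_le_sum
                  (f := fun j : Fin nY =>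
                    |Wst k i.castSucc j.castSucc - Wst (k + 1) i.castSucc j.castSucc|)
                  (fun j' _ => abs_nonneg
                    (Wst k i.castSucc j'.castSucc - Wst (k + 1) i.castSucc j'.castSucc))
                  (Finset.mem_univ j)
            _ ≤ ∑ i : Fin nX, ∑ j : Fin nY,
                  |Wst k i.castSucc j.castSucc - Wst (k + 1) i.castSucc j.castSucc| :=
                Finset.single_le_sum
                  (f := fun i : Fin nX => ∑ j : Fin nY,
                    |Wst k i.castSucc j.castSucc - Wst (k + 1) i.castSucc j.castSucc|)
                  (fun i' _ => Finset.sum_nonneg fun j' _ => abs_nonneg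
                    (Wst k i'.castSucc j'.castSucc - Wst (k + 1) i'.castSucc j'.castSucc))
                  (Finset.mem_univ i)
            _ ≤ s2 := by
                rw [hs2def]
                exact Finset.single_le_sum
                  (f := fun k' : ℕ => ∑ i' : Fin nX, ∑ j' : Fin nY,
                    |Wst k' i'.castSucc j'.castSucc - Wst (k' + 1) i'.castSucc j'.castSucc|)
                  (fun k' _ => Finset.sum_nonneg fun i' _ => Finset.sum_nonneg fun j' _ =>
                    abs_nonneg
                      (Wst k' i'.castSucc j'.castSucc - Wst (k' + 1) i'.castSucc j'.castSucc))
                  (Finset.mem_range.mpr hk)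
            _ = 0 := hs2z
        have := abs_eq_zero.mp habs0
        linarith
      have hconst0 : ∀ k, k < T → ∀ (i : Fin nX) (j : Fin nY),
          Wst k i.castSucc j.castSucc = Wst 0 i.castSucc j.castSucc := by
        intro k
        induction k with
        | zero => intro _ _ _; rfl
        | succ m ih =>
          intro hk i j
          rw [← habs m (by omega) i j]
          exact ih (by omega) i j
      have hconst : ∀ k < T, ∀ k' < T, ∀ (i : Fin nX) (j : Fin nY),
          Wst k i.castSucc j.castSucc = Wst k' i.castSucc j.castSucc :=
        fun k hk k' hk' i j => (hconst0 k hk i j).trans (hconst0 k' hk' i j).symm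
      apply Set.Subset.antisymm
      · rintro _ ⟨i, rfl⟩
        exact range_subset_aux hXwin hYwin Wst (fun k hk => (hfeas k hk).2.2.1) hmatch hconst i
      · rintro _ ⟨j, rfl⟩
        refine range_subset_aux hYwin hXwin (fun k => (Wst k).transpose)
          (fun k hk i => ?_) (fun k hk i j h => (hmatch k hk j i h).symm)
          (fun k hk k' hk' i j => hconst k hk k' hk' j i) j
        simpa [Matrix.transpose_apply] using (hfeas k hk).2.1 i
  · intro hXY
    classical
    have hmem : ∀ i, ∃ j, Y j = X i := fun i => (hXY ▸ Set.mem_range_self i : X i ∈ Set.range Y)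
    choose σ hσ using hmem
    have hmem' : ∀ j, ∃ i, X i = Y j := fun j =>
      (hXY.symm ▸ Set.mem_range_self j : Y j ∈ Set.range X)
    choose τ hτ using hmem'
    have hσinj : Function.Injective σ := fun a b hab => hXinj (by rw [← hσ a, ← hσ b, hab])
    have hτinj : Function.Injective τ := fun a b hab => hYinj (by rw [← hτ a, ← hτ b, hab])
    have hcard : nX = nY :=
      le_antisymm (by simpa using Fintype.card_le_of_injective σ hσinj)
        (by simpa using Fintype.card_le_of_injective τ hτinj)
    have hσbij : Function.Bijective σ :=
      (Fintype.bijective_iff_injective_and_card σ).mpr ⟨hσinj, by simp [hcard]⟩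
    obtain ⟨σinv, hσli, hσri⟩ := Function.bijective_iff_has_inverse.mp hσbij
    have hiff : ∀ (i : Fin nX) (j : Fin nY), σ i = j ↔ i = σinv j := by
      intro i j
      constructor
      · rintro rfl; exact (hσli i).symm
      · rintro rfl; exact hσri j
    obtain ⟨W, hWeq⟩ : ∃ W : ℕ → Matrix (Fin (nX + 1)) (Fin (nY + 1)) ℝ,
        ∀ (k : ℕ) (i : Fin (nX + 1)) (j : Fin (nY + 1)), W k i j =
          if h : (i : ℕ) < nX ∧ (j : ℕ) < nY then (if σ ⟨i, h.1⟩ = ⟨j, h.2⟩ then 1 else 0)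
          else 0 :=
      ⟨fun _ i j => if h : (i : ℕ) < nX ∧ (j : ℕ) < nY
          then (if σ ⟨i, h.1⟩ = ⟨j, h.2⟩ then 1 else 0) else 0,
       fun _ _ _ => rfl⟩
    have hWcs : ∀ k (i : Fin nX) (j : Fin nY),
        W k i.castSucc j.castSucc = if σ i = j then 1 else 0 := by
      intro k i j
      rw [hWeq]
      have h : ((i.castSucc : Fin (nX + 1)) : ℕ) < nX ∧ ((j.castSucc : Fin (nY + 1)) : ℕ) < nY := by
        constructor
        · simpa using i.isLt
        · simpa using j.isLt
      rw [dif_pos h]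
      have hi : (⟨((i.castSucc : Fin (nX + 1)) : ℕ), h.1⟩ : Fin nX) = i := Fin.ext (by simp)
      have hj : (⟨((j.castSucc : Fin (nY + 1)) : ℕ), h.2⟩ : Fin nY) = j := Fin.ext (by simp)
      rw [hi, hj]
    have hWlastrow : ∀ k (j : Fin (nY + 1)), W k (Fin.last nX) j = 0 := by
      intro k j
      rw [hWeq]
      exact dif_neg (by simp)
    have hWlastcol : ∀ k (i : Fin (nX + 1)), W k i (Fin.last nY) = 0 := by
      intro k i
      rw [hWeq]
      exact dif_neg (by simp)
    have hWfeas : ∀ k, memWbar (W k) := by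
      intro k
      refine ⟨?_, ?_, ?_, ?_⟩
      · intro i j
        rw [hWeq]
        split_ifs <;> norm_num
      · intro j
        rw [Fin.sum_univ_castSucc, hWlastrow, add_zero]
        have hterm : ∀ i : Fin nX, W k i.castSucc j.castSucc = if i = σinv j then 1 else 0 := by
          intro i
          rw [hWcs]
          exact if_congr (hiff i j) rfl rfl
        simp only [hterm]
        rw [Fintype.sum_ite_eq' (σinv j) (fun _ => (1:ℝ))]
      · intro i
        rw [Fin.sum_univ_castSucc, hWlastcol, add_zero]
        have hterm : ∀ j : Fin nY, W k i.castSucc j.castSucc = if j = σ i then 1 else 0 := by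
          intro j
          rw [hWcs]
          exact if_congr eq_comm rfl rfl
        simp only [hterm]
        rw [Fintype.sum_ite_eq' (σ i) (fun _ => (1:ℝ))]
      · exact hWlastrow k _
    have hcost : lpCost db c γ p T X Y W = 0 := by
      unfold lpCost
      have h1 : ∀ k ∈ Finset.range T,
          (∑ i, ∑ j, (dOpt db c p (tauE X i k) (tauE Y j k)) ^ p * W k i j) = 0 := by
        intro k _
        refine Finset.sum_eq_zero fun i _ => Finset.sum_eq_zero fun j _ => ?_
        rcases eq_or_ne (W k i j) 0 with h | h
        · rw [h, mul_zero]
        · rw [hWeq] at h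
          by_cases hin : ((i : ℕ) < nX ∧ (j : ℕ) < nY)
          · rw [dif_pos hin] at h
            have hσij : σ ⟨i, hin.1⟩ = ⟨j, hin.2⟩ := by
              by_contra hne
              rw [if_neg hne] at h
              exact h rfl
            have hxy : X ⟨i, hin.1⟩ = Y ⟨j, hin.2⟩ := by rw [← hσ ⟨i, hin.1⟩, hσij]
            have hta : tauE X i k = tauE Y j k := by
              rw [tauE, tauE, dif_pos hin.1, dif_pos hin.2, hxy]
            rw [hta, dOpt_self hc.le hdb_eq, Real.zero_rpow hpne, zero_mul]
          · rw [dif_neg hin] at h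
            exact absurd rfl h
      have h2 : ∀ k ∈ Finset.range (T - 1),
          (∑ i : Fin nX, ∑ j : Fin nY,
            |W k i.castSucc j.castSucc - W (k + 1) i.castSucc j.castSucc|) = 0 := by
        intro k _
        refine Finset.sum_eq_zero fun i _ => Finset.sum_eq_zero fun j _ => ?_
        rw [hWcs, hWcs, sub_self, abs_zero]
      rw [Finset.sum_eq_zero h1, Finset.sum_eq_zero h2, mul_zero, add_zero]
    unfold lpDist
    have hlb : ∀ v ∈ {v | ∃ W' : ℕ → Matrix (Fin (nX + 1)) (Fin (nY + 1)) ℝ,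
        (∀ k < T, memWbar (W' k)) ∧ v = (lpCost db c γ p T X Y W') ^ (1 / p)}, (0:ℝ) ≤ v := by
      rintro v ⟨W', hW', rfl⟩
      exact Real.rpow_nonneg
        (lpCost_nonneg hc.le hγ.le hdb_nonneg T X Y W' (fun k hk i j => (hW' k hk).1 i j)) _
    have hmemV : (0:ℝ) ∈ {v | ∃ W' : ℕ → Matrix (Fin (nX + 1)) (Fin (nY + 1)) ℝ,
        (∀ k < T, memWbar (W' k)) ∧ v = (lpCost db c γ p T X Y W') ^ (1 / p)} :=
      ⟨W, fun k _ => hWfeas k, by rw [hcost, Real.zero_rpow hpinv]⟩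
    exact le_antisymm (csInf_le ⟨0, fun v hv => hlb v hv⟩ hmemV) (Real.sInf_nonneg hlb)
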